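/- arXiv:2406.11118 — 10 statements merged into one kernel-verified Lean document; each statement's English description precedes it below -/
import Mathlib

section
/- Let F be an n×m row-stochastic matrix and c^const = (c', …, c', c_n) with c' < c_n. A vector t ∈ ℝ_{≥0}^m implements action n in the setting (F, c^const) if and only if, writing B = max_j t_j > 0 and ψ = t/B, the test ψ satisfies FP_i(ψ) + FN(ψ) ≤ 1 − (c_n − c')/B for every i < n, where FP_i(ψ) = Σ_j F_{ij}ψ_j and FN(ψ) = Σ_j F_{nj}(1 − ψ_j). -/
/-- Under uniform non-target costs, a contract implements the target action
iff its normalized test `ψ = t / B` satisfies `FP_i + FN ≤ 1 - (c_n - c')/B`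
for every non-target action. -/
theorem uniform_cost_ic_iff_test_risk
    (n m : ℕ) (hm : 0 < m)
    (F : Fin (n + 1) → Fin m → ℝ)
    (hFnonneg : ∀ i j, 0 ≤ F i j)
    (hFsum : ∀ i, ∑ j, F i j = 1)
    (c' cn : ℝ) (hc' : 0 ≤ c') (hcn : c' < cn)
    (t : Fin m → ℝ) (ht : ∀ j, 0 ≤ t j)
    (B : ℝ) (hB : B = Finset.univ.sup' ⟨(⟨0, hm⟩ : Fin m), Finset.mem_univ _⟩ t)
    (hBpos : 0 < B)
    (ψ : Fin m → ℝ) (hψ : ∀ j, ψ j = t j / B) :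
    (∀ i, i ≠ Fin.last n →
      ∑ j, F i j * t j - c' ≤ ∑ j, F (Fin.last n) j * t j - cn) ↔
    (∀ i, i ≠ Fin.last n →
      (∑ j, F i j * ψ j) + (∑ j, F (Fin.last n) j * (1 - ψ j)) ≤
        1 - (cn - c') / B) := by
  apply forall_congr'
  intro i
  apply imp_congr_right
  intro _
  have h1 : ∑ j, F i j * ψ j = (∑ j, F i j * t j) / B := by
    simp [hψ, mul_div_assoc, Finset.sum_div]
  have h2 : ∑ j, F (Fin.last n) j * (1 - ψ j)
      = 1 - (∑ j, F (Fin.last n) j * t j) / B := by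
    simp only [mul_sub, mul_one, Finset.sum_sub_distrib, hFsum, hψ,
      mul_div_assoc, Finset.sum_div]
  rw [h1, h2]
  have hBne : B ≠ 0 := ne_of_gt hBpos
  have e1 : (∑ j, F i j * t j) / B * B = ∑ j, F i j * t j := div_mul_cancel₀ _ hBne
  have e2 : (∑ j, F (Fin.last n) j * t j) / B * B = ∑ j, F (Fin.last n) j * t j :=
    div_mul_cancel₀ _ hBne
  have e3 : (cn - c') / B * B = cn - c' := div_mul_cancel₀ _ hBne
  constructor <;> intro h <;> nlinarith [mul_le_mul_of_nonneg_right h hBpos.le, e1, e2, e3]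
end

section
/- Let F be an n×m row-stochastic matrix, c' < c_n, and c^const = (c',…,c',c_n). Let ψ* ∈ [0,1]^m be a minimizer of R(ψ) = max_{i<n} (Σ_j F_{ij}ψ_j + Σ_j F_{nj}(1−ψ_j)) with optimal value R* < 1. Then the contract t* = (c_n − c')/(1 − R*) · ψ* implements action n, has budget max_j t*_j = (c_n − c')/(1 − R*), and every contract implementing action n in (F, c^const) has budget at least (c_n − c')/(1 − R*). -/
/-- Min-budget optimality in uniform-cost settings: scaling the minimax
sum-optimal test by `(c_n - c')/(1 - R*)` yields the min-budget contract. -/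
theorem min_budget_uniform_cost_statistical_contract
    (n m : ℕ) (hn : 0 < n) (hm : 0 < m)
    (F : Fin (n + 1) → Fin m → ℝ)
    (hFnonneg : ∀ i j, 0 ≤ F i j)
    (hFsum : ∀ i, ∑ j, F i j = 1)
    (c' cn : ℝ) (hc' : 0 ≤ c') (hcn : c' < cn)
    (R : (Fin m → ℝ) → ℝ)
    (hR : ∀ ψ, R ψ = Finset.univ.sup' ⟨(⟨0, hn⟩ : Fin n), Finset.mem_univ _⟩
      (fun i : Fin n =>
        (∑ j, F i.castSucc j * ψ j) + (∑ j, F (Fin.last n) j * (1 - ψ j))))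
    (ψStar : Fin m → ℝ)
    (hψStarBox : ∀ j, 0 ≤ ψStar j ∧ ψStar j ≤ 1)
    (hψStarMin : ∀ ψ : Fin m → ℝ, (∀ j, 0 ≤ ψ j ∧ ψ j ≤ 1) → R ψStar ≤ R ψ)
    (Rstar : ℝ) (hRstar : Rstar = R ψStar) (hRlt : Rstar < 1)
    (tStar : Fin m → ℝ)
    (htStar : ∀ j, tStar j = (cn - c') / (1 - Rstar) * ψStar j) :
    (∀ i, i ≠ Fin.last n →
      ∑ j, F i j * tStar j - c' ≤ ∑ j, F (Fin.last n) j * tStar j - cn) ∧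
    (Finset.univ.sup' ⟨(⟨0, hm⟩ : Fin m), Finset.mem_univ _⟩ tStar =
      (cn - c') / (1 - Rstar)) ∧
    (∀ t : Fin m → ℝ, (∀ j, 0 ≤ t j) →
      (∀ i, i ≠ Fin.last n →
        ∑ j, F i j * t j - c' ≤ ∑ j, F (Fin.last n) j * t j - cn) →
      (cn - c') / (1 - Rstar) ≤
        Finset.univ.sup' ⟨(⟨0, hm⟩ : Fin m), Finset.mem_univ _⟩ t) := by
  have h1R : 0 < 1 - Rstar := by linarith
  have hB : 0 < (cn - c') / (1 - Rstar) := div_pos (by linarith) h1R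
  set B := (cn - c') / (1 - Rstar) with hBdef
  have hsumlast : ∀ ψ : Fin m → ℝ,
      ∑ j, F (Fin.last n) j * (1 - ψ j) = 1 - ∑ j, F (Fin.last n) j * ψ j := by
    intro ψ
    simp [mul_sub, Finset.sum_sub_distrib, hFsum (Fin.last n)]
  have hterm : ∀ i : Fin n,
      (∑ j, F i.castSucc j * ψStar j) + (1 - ∑ j, F (Fin.last n) j * ψStar j) ≤ Rstar := by
    intro i
    rw [hRstar, hR, ← hsumlast ψStar]
    exact Finset.le_sup' (fun i : Fin n =>
      (∑ j, F i.castSucc j * ψStar j) + (∑ j, F (Fin.last n) j * (1 - ψStar j)))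
      (Finset.mem_univ i)
  have hscale : ∀ i : Fin (n+1), ∑ j, F i j * tStar j = B * ∑ j, F i j * ψStar j := by
    intro i
    rw [Finset.mul_sum]
    refine Finset.sum_congr rfl fun j _ => ?_
    rw [htStar j]; ring
  have hB1 : B * (Rstar - 1) = -(cn - c') := by
    rw [hBdef]
    field_simp
    ring
  have part1 : ∀ i, i ≠ Fin.last n →
      ∑ j, F i j * tStar j - c' ≤ ∑ j, F (Fin.last n) j * tStar j - cn := by
    intro i hi
    obtain ⟨i', rfl⟩ := Fin.exists_castSucc_eq.mpr hi
    have ht := hterm i'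
    rw [hscale, hscale]
    have h2 : (∑ j, F i'.castSucc j * ψStar j) - (∑ j, F (Fin.last n) j * ψStar j)
        ≤ Rstar - 1 := by linarith
    have h3 := mul_le_mul_of_nonneg_left h2 hB.le
    rw [mul_sub] at h3
    linarith
  have part3 : ∀ t : Fin m → ℝ, (∀ j, 0 ≤ t j) →
      (∀ i, i ≠ Fin.last n →
        ∑ j, F i j * t j - c' ≤ ∑ j, F (Fin.last n) j * t j - cn) →
      B ≤ Finset.univ.sup' ⟨(⟨0, hm⟩ : Fin m), Finset.mem_univ _⟩ t := by
    intro t ht0 himpl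
    set T := Finset.univ.sup' (⟨(⟨0, hm⟩ : Fin m), Finset.mem_univ _⟩ :
      Finset.Nonempty Finset.univ) t with hT
    have hTt : ∀ j, t j ≤ T := fun j => Finset.le_sup' t (Finset.mem_univ j)
    have hT0 : 0 ≤ T := le_trans (ht0 ⟨0, hm⟩) (hTt ⟨0, hm⟩)
    rcases eq_or_lt_of_le hT0 with h0 | hTpos
    · exfalso
      have ht : ∀ j, t j = 0 := fun j => le_antisymm (h0 ▸ hTt j) (ht0 j)
      have h4 := himpl (⟨0, hn⟩ : Fin n).castSucc (Fin.castSucc_lt_last _).ne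
      simp only [ht, mul_zero, Finset.sum_const_zero, zero_sub] at h4
      linarith
    · have hbox : ∀ j, 0 ≤ t j / T ∧ t j / T ≤ 1 :=
        fun j => ⟨div_nonneg (ht0 j) hT0, (div_le_one hTpos).mpr (hTt j)⟩
      have hmin := hψStarMin (fun j => t j / T) hbox
      rw [← hRstar, hR] at hmin
      have e1 : ∀ k : Fin (n+1), ∑ j, F k j * (t j / T) = (∑ j, F k j * t j) / T := by
        intro k
        rw [Finset.sum_div]
        exact Finset.sum_congr rfl fun j _ => by ring
      have hsup_le : Finset.univ.sup' ⟨(⟨0, hn⟩ : Fin n), Finset.mem_univ _⟩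
          (fun i : Fin n => (∑ j, F i.castSucc j * (t j / T))
            + (∑ j, F (Fin.last n) j * (1 - t j / T))) ≤ 1 - (cn - c') / T := by
        apply Finset.sup'_le
        intro i _
        have hi := himpl i.castSucc (Fin.castSucc_lt_last _).ne
        rw [hsumlast, e1, e1]
        have h5 : (∑ j, F i.castSucc j * t j) - (∑ j, F (Fin.last n) j * t j)
            ≤ c' - cn := by linarith
        have h6 : ((∑ j, F i.castSucc j * t j) - (∑ j, F (Fin.last n) j * t j)) / T
            ≤ (c' - cn) / T := by
          apply div_le_div_of_nonneg_right h5 hT0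
        rw [sub_div, sub_div] at h6
        rw [sub_div]
        linarith
      have h7 : Rstar ≤ 1 - (cn - c') / T := le_trans hmin hsup_le
      have h8 : (cn - c') / T ≤ 1 - Rstar := by linarith
      rw [div_le_iff₀ hTpos] at h8
      rw [hBdef, div_le_iff₀ h1R]
      nlinarith
  have htStar0 : ∀ j, 0 ≤ tStar j := fun j => by
    rw [htStar]; exact mul_nonneg hB.le (hψStarBox j).1
  have hub : Finset.univ.sup' ⟨(⟨0, hm⟩ : Fin m), Finset.mem_univ _⟩ tStar ≤ B := by
    apply Finset.sup'_le
    intro j _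
    rw [htStar]
    nlinarith [(hψStarBox j).2, hB.le, (hψStarBox j).1]
  exact ⟨part1, le_antisymm hub (part3 tStar htStar0 part1), part3⟩
end

section
/- Let F be an n×m row-stochastic matrix, c' < c_n, c^const = (c',…,c',c_n). Suppose ψ* ∈ [0,1]^m minimizes ρ(ψ) = max_{i<n} (Σ_j F_{ij}ψ_j)/(Σ_j F_{nj}ψ_j) over tests with Σ_j F_{nj}ψ_j > 0, with optimal value ρ* < 1. Then the contract t* = (c_n − c')/(TP(ψ*) − FP(ψ*)) · ψ*, where TP(ψ) = Σ_j F_{nj}ψ_j and FP(ψ) = max_{i<n} Σ_j F_{ij}ψ_j, implements action n with expected payment Σ_j F_{nj}t*_j = (c_n − c')/(1 − ρ*), and every contract implementing action n in (F, c^const) has expected payment under F_n at least (c_n − c')/(1 − ρ*). -/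
/-- Min-pay optimality in uniform-cost settings: scaling the minimax
ratio-optimal test yields the min-pay contract, with expected payment
`(c_n - c')/(1 - ρ*)`. -/
theorem min_pay_uniform_cost_statistical_contract
    (n m : ℕ) (hn : 0 < n) (hm : 0 < m)
    (F : Fin (n + 1) → Fin m → ℝ)
    (hFnonneg : ∀ i j, 0 ≤ F i j)
    (hFsum : ∀ i, ∑ j, F i j = 1)
    (c' cn : ℝ) (hc' : 0 ≤ c') (hcn : c' < cn)
    (TP : (Fin m → ℝ) → ℝ)
    (hTP : ∀ ψ, TP ψ = ∑ j, F (Fin.last n) j * ψ j)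
    (FP : (Fin m → ℝ) → ℝ)
    (hFP : ∀ ψ, FP ψ = Finset.univ.sup' ⟨(⟨0, hn⟩ : Fin n), Finset.mem_univ _⟩
      (fun i : Fin n => ∑ j, F i.castSucc j * ψ j))
    (ρ : (Fin m → ℝ) → ℝ)
    (hρ : ∀ ψ, ρ ψ = FP ψ / TP ψ)
    (ψStar : Fin m → ℝ)
    (hψStarBox : ∀ j, 0 ≤ ψStar j ∧ ψStar j ≤ 1)
    (hψStarTP : 0 < TP ψStar)
    (hψStarMin : ∀ ψ : Fin m → ℝ, (∀ j, 0 ≤ ψ j ∧ ψ j ≤ 1) → 0 < TP ψ →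
      ρ ψStar ≤ ρ ψ)
    (ρstar : ℝ) (hρstar : ρstar = ρ ψStar) (hρlt : ρstar < 1)
    (tStar : Fin m → ℝ)
    (htStar : ∀ j, tStar j = (cn - c') / (TP ψStar - FP ψStar) * ψStar j) :
    (∀ i, i ≠ Fin.last n →
      ∑ j, F i j * tStar j - c' ≤ ∑ j, F (Fin.last n) j * tStar j - cn) ∧
    (∑ j, F (Fin.last n) j * tStar j = (cn - c') / (1 - ρstar)) ∧
    (∀ t : Fin m → ℝ, (∀ j, 0 ≤ t j) →
      (∀ i, i ≠ Fin.last n →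
        ∑ j, F i j * t j - c' ≤ ∑ j, F (Fin.last n) j * t j - cn) →
      (cn - c') / (1 - ρstar) ≤ ∑ j, F (Fin.last n) j * t j) := by

  have hFPle : ∀ (ψ : Fin m → ℝ) (i : Fin (n+1)), i ≠ Fin.last n →
      ∑ j, F i j * ψ j ≤ FP ψ := by
    intro ψ i hi
    rw [hFP]
    have hiv : (i : ℕ) < n := by
      rcases lt_or_eq_of_le (Nat.lt_succ_iff.mp i.isLt) with h | h
      · exact h
      · exact absurd (by apply Fin.ext; simpa using h) hi
    have hcast : (⟨(i : ℕ), hiv⟩ : Fin n).castSucc = i := by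
      apply Fin.ext; simp
    calc ∑ j, F i j * ψ j
        = ∑ j, F ((⟨(i : ℕ), hiv⟩ : Fin n).castSucc) j * ψ j := by rw [hcast]
      _ ≤ _ := Finset.le_sup' (fun i : Fin n => ∑ j, F i.castSucc j * ψ j)
          (Finset.mem_univ ⟨(i : ℕ), hiv⟩)
  have hFPnonneg : ∀ ψ : Fin m → ℝ, (∀ j, 0 ≤ ψ j) → 0 ≤ FP ψ := by
    intro ψ hψ
    have h0 : (0:ℝ) ≤ ∑ j, F ((⟨0, hn⟩ : Fin n).castSucc) j * ψ j :=
      Finset.sum_nonneg fun j _ => mul_nonneg (hFnonneg _ _) (hψ j)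
    rw [hFP]
    exact le_trans h0 (Finset.le_sup' (fun i : Fin n => ∑ j, F i.castSucc j * ψ j)
      (Finset.mem_univ ⟨0, hn⟩))
  set S := TP ψStar with hSdef
  set M := FP ψStar with hMdef
  have hS : 0 < S := hψStarTP
  have hρs : ρstar = M / S := by rw [hρstar, hρ]
  have hMS : M < S := by
    have h := hρlt
    rw [hρs, div_lt_one hS] at h
    exact h
  have hSM : 0 < S - M := sub_pos.mpr hMS
  have hk : 0 < (cn - c') / (S - M) := div_pos (sub_pos.mpr hcn) hSM
  have hsum : ∀ i : Fin (n+1), ∑ j, F i j * tStar j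
      = (cn - c') / (S - M) * ∑ j, F i j * ψStar j := by
    intro i
    rw [Finset.mul_sum]
    refine Finset.sum_congr rfl fun j _ => ?_
    rw [htStar j]; ring
  have h2 : ∑ j, F (Fin.last n) j * ψStar j = S := (hTP ψStar).symm
  refine ⟨?_, ?_, ?_⟩
  · intro i hi
    have h1 : ∑ j, F i j * ψStar j ≤ M := hFPle ψStar i hi
    rw [hsum i, hsum (Fin.last n), h2]
    have h3 : (cn - c') / (S - M) * ∑ j, F i j * ψStar j
        ≤ (cn - c') / (S - M) * M :=
      mul_le_mul_of_nonneg_left h1 (le_of_lt hk)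
    have h4 : (cn - c') / (S - M) * (S - M) = cn - c' :=
      div_mul_cancel₀ _ (ne_of_gt hSM)
    nlinarith
  · rw [hsum (Fin.last n), h2, hρs]
    have hS0 : S ≠ 0 := ne_of_gt hS
    have hSM0 : S - M ≠ 0 := ne_of_gt hSM
    field_simp
  · intro t ht hImp
    set T := ∑ j, F (Fin.last n) j * t j with hTdef
    have hFPt : FP t ≤ T - (cn - c') := by
      rw [hFP]
      apply Finset.sup'_le
      intro k _
      have hk' : (k.castSucc : Fin (n+1)) ≠ Fin.last n :=
        ne_of_lt (Fin.castSucc_lt_last k)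
      have := hImp k.castSucc hk'
      linarith
    have hFPt0 : 0 ≤ FP t := hFPnonneg t ht
    have hT : 0 < T := by linarith [sub_pos.mpr hcn]
    set B := (∑ j, t j) + 1 with hBdef
    have hB : 0 < B := by
      have : 0 ≤ ∑ j, t j := Finset.sum_nonneg fun j _ => ht j
      linarith
    set ψ := fun j => t j / B with hψdef
    have hψbox : ∀ j, 0 ≤ ψ j ∧ ψ j ≤ 1 := by
      intro j
      constructor
      · exact div_nonneg (ht j) (le_of_lt hB)
      · rw [hψdef]
        simp only
        rw [div_le_one hB]
        have := Finset.single_le_sum (fun j _ => ht j) (Finset.mem_univ j)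
        linarith
    have hTPψ : TP ψ = T / B := by
      rw [hTP, hTdef, Finset.sum_div]
      exact Finset.sum_congr rfl fun j _ => by rw [hψdef]; ring
    have hTPψpos : 0 < TP ψ := by rw [hTPψ]; exact div_pos hT hB
    have hFPψ : FP ψ ≤ (T - (cn - c')) / B := by
      rw [hFP]
      apply Finset.sup'_le
      intro k _
      have hk' : (k.castSucc : Fin (n+1)) ≠ Fin.last n :=
        ne_of_lt (Fin.castSucc_lt_last k)
      have himp := hImp k.castSucc hk'
      have hstep : ∑ j, F k.castSucc j * ψ j = (∑ j, F k.castSucc j * t j) / B := by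
        rw [Finset.sum_div]
        exact Finset.sum_congr rfl fun j _ => by rw [hψdef]; ring
      rw [hstep]
      apply (div_le_div_iff_of_pos_right hB).mpr
      linarith
    have h1 : ρstar ≤ FP ψ / TP ψ := by
      rw [hρstar, ← hρ ψ]
      exact hψStarMin ψ hψbox hTPψpos
    have h2' : FP ψ / TP ψ ≤ (T - (cn - c')) / T := by
      rw [hTPψ]
      have hstep := (div_le_div_iff_of_pos_right (div_pos hT hB)).mpr hFPψ
      have heq : ((T - (cn - c')) / B) / (T / B) = (T - (cn - c')) / T := by
        field_simp
      rw [heq] at hstep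
      exact hstep
    have h3 : ρstar * T ≤ T - (cn - c') :=
      (le_div_iff₀ hT).mp (le_trans h1 h2')
    rw [div_le_iff₀ (by linarith : (0:ℝ) < 1 - ρstar)]
    nlinarith
end

section
/- Let F be an n×m row-stochastic matrix, b > 0, and let C_b be the set of nondecreasing cost vectors c ∈ ℝ_{≥0}^n with c_n − c_1 ≤ b. A contract t is b-cost-robust if it implements action n for every c ∈ C_b. Then t is b-cost-robust if and only if t implements action n for the single cost vector c^0 = (0,…,0,b). -/
/-- A contract is `b`-cost-robust iff it implements the target action for the
single cost vector `c^0 = (0, …, 0, b)`. -/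
theorem cost_robust_iff_extreme_cost_vector
    (n m : ℕ)
    (F : Fin (n + 1) → Fin m → ℝ)
    (hFnonneg : ∀ i j, 0 ≤ F i j)
    (hFsum : ∀ i, ∑ j, F i j = 1)
    (b : ℝ) (hb : 0 < b)
    (t : Fin m → ℝ) (ht : ∀ j, 0 ≤ t j) :
    (∀ c : Fin (n + 1) → ℝ, (∀ i, 0 ≤ c i) → Monotone c →
      c (Fin.last n) - c 0 ≤ b →
      (∀ i, i ≠ Fin.last n →
        ∑ j, F i j * t j - c i ≤ ∑ j, F (Fin.last n) j * t j - c (Fin.last n))) ↔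
    (∀ i, i ≠ Fin.last n →
      ∑ j, F i j * t j - 0 ≤ ∑ j, F (Fin.last n) j * t j - b) := by
  constructor
  · intro h i hi
    have hc := h (fun k => if k = Fin.last n then b else 0)
      (by intro k; split <;> [exact hb.le; exact le_refl 0])
      (by
        intro x y hxy
        dsimp
        by_cases hy : y = Fin.last n
        · subst hy; split <;> simp [hb.le]
        · have hx : x ≠ Fin.last n := by
            intro hx; exact hy (le_antisymm (Fin.le_last y) (hx ▸ hxy))
          simp [hx, hy])
      (by
        by_cases h0 : (0 : Fin (n+1)) = Fin.last n <;> simp [h0, hb.le])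
      i hi
    simpa [hi] using hc
  · intro h c hc hmono hcb i hi
    have h1 := h i hi
    have h2 : c i ≤ c (Fin.last n) := hmono (Fin.le_last i)
    have h3 : c 0 ≤ c i := hmono (Fin.zero_le i)
    linarith
end

section
/- Let F be an n×m row-stochastic matrix and b > 0. Let ψ*_R minimize the minimax composite risk R(ψ) = max_{i<n}(Σ_j F_{ij}ψ_j + Σ_j F_{nj}(1−ψ_j)) over ψ ∈ [0,1]^m, with R* = R(ψ*_R) < 1. Then the contract b/(1 − R*) · ψ*_R implements action n for every nondecreasing cost vector c with c_n − c_1 ≤ b, and any contract with this robustness property has budget max_j t_j ≥ b/(1 − R*). -/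
/-- Optimal cost-robust contracts (min-budget case): the sum-optimal
statistical contract `b/(1-R*) · ψ*` is `b`-cost-robust, and any
`b`-cost-robust contract has budget at least `b/(1-R*)`. -/
theorem cost_robust_min_budget_characterization
    (n m : ℕ) (hn : 0 < n) (hm : 0 < m)
    (F : Fin (n + 1) → Fin m → ℝ)
    (hFnonneg : ∀ i j, 0 ≤ F i j)
    (hFsum : ∀ i, ∑ j, F i j = 1)
    (b : ℝ) (hb : 0 < b)
    (R : (Fin m → ℝ) → ℝ)
    (hR : ∀ ψ, R ψ = Finset.univ.sup' ⟨(⟨0, hn⟩ : Fin n), Finset.mem_univ _⟩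
      (fun i : Fin n =>
        (∑ j, F i.castSucc j * ψ j) + (∑ j, F (Fin.last n) j * (1 - ψ j))))
    (ψStar : Fin m → ℝ)
    (hψStarBox : ∀ j, 0 ≤ ψStar j ∧ ψStar j ≤ 1)
    (hψStarMin : ∀ ψ : Fin m → ℝ, (∀ j, 0 ≤ ψ j ∧ ψ j ≤ 1) → R ψStar ≤ R ψ)
    (Rstar : ℝ) (hRstar : Rstar = R ψStar) (hRlt : Rstar < 1)
    (tStar : Fin m → ℝ)
    (htStar : ∀ j, tStar j = b / (1 - Rstar) * ψStar j) :
    (∀ c : Fin (n + 1) → ℝ, (∀ i, 0 ≤ c i) → Monotone c →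
      c (Fin.last n) - c 0 ≤ b →
      (∀ i, i ≠ Fin.last n →
        ∑ j, F i j * tStar j - c i ≤
          ∑ j, F (Fin.last n) j * tStar j - c (Fin.last n))) ∧
    (∀ t : Fin m → ℝ, (∀ j, 0 ≤ t j) →
      (∀ c : Fin (n + 1) → ℝ, (∀ i, 0 ≤ c i) → Monotone c →
        c (Fin.last n) - c 0 ≤ b →
        (∀ i, i ≠ Fin.last n →
          ∑ j, F i j * t j - c i ≤
            ∑ j, F (Fin.last n) j * t j - c (Fin.last n))) →
      b / (1 - Rstar) ≤
        Finset.univ.sup' ⟨(⟨0, hm⟩ : Fin m), Finset.mem_univ _⟩ t) := by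

  have h1R : 0 < 1 - Rstar := by linarith
  have hBpos : 0 < b / (1 - Rstar) := div_pos hb h1R
  constructor
  · intro c hc hmono hcb i hi
    obtain ⟨i', rfl⟩ := Fin.exists_castSucc_eq.mpr hi
    have hterm : (∑ j, F i'.castSucc j * ψStar j)
        + (∑ j, F (Fin.last n) j * (1 - ψStar j)) ≤ Rstar := by
      rw [hRstar, hR]
      exact Finset.le_sup' (fun i : Fin n =>
        (∑ j, F i.castSucc j * ψStar j) + (∑ j, F (Fin.last n) j * (1 - ψStar j)))
        (Finset.mem_univ i')
    have hsplit : ∑ j, F (Fin.last n) j * (1 - ψStar j)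
        = 1 - ∑ j, F (Fin.last n) j * ψStar j := by
      have : ∑ j, F (Fin.last n) j * (1 - ψStar j)
          = (∑ j, F (Fin.last n) j) - ∑ j, F (Fin.last n) j * ψStar j := by
        rw [← Finset.sum_sub_distrib]; congr 1; ext j; ring
      rw [this, hFsum]
    have hgap : 1 - Rstar ≤ (∑ j, F (Fin.last n) j * ψStar j)
        - ∑ j, F i'.castSucc j * ψStar j := by
      rw [hsplit] at hterm; linarith
    have ht1 : ∑ j, F (Fin.last n) j * tStar j
        = b / (1 - Rstar) * ∑ j, F (Fin.last n) j * ψStar j := by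
      rw [Finset.mul_sum]; congr 1; ext j; rw [htStar j]; ring
    have ht2 : ∑ j, F i'.castSucc j * tStar j
        = b / (1 - Rstar) * ∑ j, F i'.castSucc j * ψStar j := by
      rw [Finset.mul_sum]; congr 1; ext j; rw [htStar j]; ring
    have hbB : b / (1 - Rstar) * (1 - Rstar) = b := div_mul_cancel₀ b h1R.ne'
    have hge : b ≤ ∑ j, F (Fin.last n) j * tStar j - ∑ j, F i'.castSucc j * tStar j := by
      rw [ht1, ht2, ← mul_sub]
      calc b = b / (1 - Rstar) * (1 - Rstar) := hbB.symm
        _ ≤ _ := by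
          apply mul_le_mul_of_nonneg_left hgap hBpos.le
    have hc0 : c 0 ≤ c i'.castSucc := hmono (Fin.zero_le _)
    linarith
  · intro t ht hrob
    set T := Finset.univ.sup' ⟨(⟨0, hm⟩ : Fin m), Finset.mem_univ _⟩ t with hT
    have hle : ∀ j, t j ≤ T := fun j => Finset.le_sup' t (Finset.mem_univ j)
    -- the cost vector: 0 everywhere except b at the last action
    set c : Fin (n + 1) → ℝ := fun i => if i = Fin.last n then b else 0 with hcdef
    have hclast : c (Fin.last n) = b := by simp [hcdef]
    have hcne : ∀ i, i ≠ Fin.last n → c i = 0 := by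
      intro i hi; simp [hcdef, hi]
    have hcnonneg : ∀ i, 0 ≤ c i := by
      intro i; by_cases h : i = Fin.last n <;> simp [hcdef, h, hb.le]
    have hcmono : Monotone c := by
      intro i j hij
      by_cases hj : j = Fin.last n
      · rw [hj, hclast]
        by_cases h : i = Fin.last n <;> simp [hcdef, h, hb.le]
      · have hi : i ≠ Fin.last n := by
          intro h; subst h; exact hj (le_antisymm (Fin.le_last j) hij)
        rw [hcne i hi, hcne j hj]
    have hc0 : c 0 = 0 := by
      apply hcne
      intro h
      have := congrArg Fin.val h
      simp [Fin.last] at this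
      omega
    have hkey := hrob c hcnonneg hcmono (by rw [hclast, hc0]; linarith)
    have hkey' : ∀ i : Fin n, b ≤ (∑ j, F (Fin.last n) j * t j)
        - ∑ j, F i.castSucc j * t j := by
      intro i
      have h := hkey i.castSucc (Fin.castSucc_lt_last i).ne
      rw [hclast, hcne _ (Fin.castSucc_lt_last i).ne] at h
      linarith
    have hTpos : 0 < T := by
      by_contra h
      push_neg at h
      have ht0 : ∀ j, t j = 0 := fun j => le_antisymm (le_trans (hle j) h) (ht j)
      have := hkey' ⟨0, hn⟩
      simp [ht0] at this
      linarith
    set ψ : Fin m → ℝ := fun j => t j / T with hψdef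
    have hψbox : ∀ j, 0 ≤ ψ j ∧ ψ j ≤ 1 := by
      intro j
      constructor
      · exact div_nonneg (ht j) hTpos.le
      · rw [div_le_one hTpos]; exact hle j
    have hRψ : R ψ ≤ 1 - b / T := by
      rw [hR]
      apply Finset.sup'_le
      intro i _
      have hs1 : ∑ j, F i.castSucc j * ψ j = (∑ j, F i.castSucc j * t j) / T := by
        rw [Finset.sum_div]; congr 1; ext j; rw [hψdef]; ring
      have hs2 : ∑ j, F (Fin.last n) j * (1 - ψ j)
          = 1 - (∑ j, F (Fin.last n) j * t j) / T := by
        have : ∑ j, F (Fin.last n) j * (1 - ψ j)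
            = (∑ j, F (Fin.last n) j) - ∑ j, F (Fin.last n) j * ψ j := by
          rw [← Finset.sum_sub_distrib]; congr 1; ext j; ring
        rw [this, hFsum, Finset.sum_div]
        congr 2; ext j; rw [hψdef]; ring
      rw [hs1, hs2]
      have := hkey' i
      have hdiv : b / T ≤ ((∑ j, F (Fin.last n) j * t j)
          - ∑ j, F i.castSucc j * t j) / T :=
        (div_le_div_iff_of_pos_right hTpos).mpr this
      rw [sub_div] at hdiv
      linarith
    have hRs : Rstar ≤ 1 - b / T := by
      rw [hRstar]; exact le_trans (hψStarMin ψ hψbox) hRψ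
    have hbT : b / T ≤ 1 - Rstar := by linarith
    rw [div_le_iff₀ h1R]
    have : b ≤ (1 - Rstar) * T := by
      rw [div_le_iff₀ hTpos] at hbT
      linarith
    linarith
end

section
/- The approximation ratio b/a in the preceding statement is tight: for the 3-action, 2-outcome setting F_1 = (1,0), F_2 = (ε, 1−ε), F_3 = (0,1) with costs c_1 < c_2 < c_3 and 0 < ε < (c_3 − c_2)/(c_3 − c_1), the minimum budget among contracts implementing action 3 is (c_3 − c_2)/ε, while the minimum-budget (c_3 − c_1)-cost-robust contract has budget (c_3 − c_1)/ε, so the ratio is exactly (c_3 − c_1)/(c_3 − c_2). -/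
/-- Tightness of the `b/a` approximation ratio: in the 3-action, 2-outcome
setting `F₁ = (1,0)`, `F₂ = (ε, 1-ε)`, `F₃ = (0,1)` with
`ε < (c₃-c₂)/(c₃-c₁)`, the optimal budget is `(c₃-c₂)/ε` while the optimal
`(c₃-c₁)`-cost-robust budget is `(c₃-c₁)/ε`. -/
theorem approximation_ratio_tight
    (c1 c2 c3 : ℝ) (hc1 : 0 ≤ c1) (h12 : c1 < c2) (h23 : c2 < c3)
    (ε : ℝ) (hε : 0 < ε) (hεlt : ε < (c3 - c2) / (c3 - c1)) :
    (sInf {B : ℝ | ∃ t0 t1 : ℝ, 0 ≤ t0 ∧ 0 ≤ t1 ∧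
        (t0 - c1 ≤ t1 - c3) ∧
        (ε * t0 + (1 - ε) * t1 - c2 ≤ t1 - c3) ∧
        B = max t0 t1} = (c3 - c2) / ε) ∧
    (sInf {B : ℝ | ∃ t0 t1 : ℝ, 0 ≤ t0 ∧ 0 ≤ t1 ∧
        (∀ c' : Fin 3 → ℝ, (∀ i, 0 ≤ c' i) → Monotone c' →
          c' 2 - c' 0 ≤ c3 - c1 →
          (t0 - c' 0 ≤ t1 - c' 2) ∧
          (ε * t0 + (1 - ε) * t1 - c' 1 ≤ t1 - c' 2)) ∧
        B = max t0 t1} = (c3 - c1) / ε) ∧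
    ((c3 - c1) / ε) / ((c3 - c2) / ε) = (c3 - c1) / (c3 - c2) := by
  have hc13 : c1 < c3 := h12.trans h23
  have hpos : (0:ℝ) < c3 - c1 := by linarith
  have hkey : ε * (c3 - c1) < c3 - c2 := by
    have := (lt_div_iff₀ hpos).mp hεlt
    linarith
  have hε1 : ε < 1 := by nlinarith
  have h32pos : (0:ℝ) < c3 - c2 := by linarith
  have hcan2 : ε * ((c3 - c2) / ε) = c3 - c2 := mul_div_cancel₀ _ hε.ne'
  have hcan1 : ε * ((c3 - c1) / ε) = c3 - c1 := mul_div_cancel₀ _ hε.ne'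
  have hd2nn : (0:ℝ) ≤ (c3 - c2) / ε := le_of_lt (div_pos h32pos hε)
  have hd1nn : (0:ℝ) ≤ (c3 - c1) / ε := le_of_lt (div_pos hpos hε)
  refine ⟨?_, ?_, ?_⟩
  · apply IsLeast.csInf_eq
    constructor
    · refine ⟨0, (c3 - c2) / ε, le_refl 0, hd2nn, ?_, ?_, ?_⟩
      · have : c3 - c1 < (c3 - c2) / ε := (lt_div_iff₀ hε).mpr (by nlinarith)
        linarith
      · linarith
      · exact (max_eq_right hd2nn).symm
    · rintro B ⟨t0, t1, h0, h1, hA, hB, rfl⟩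
      have ht1 : (c3 - c2) / ε ≤ t1 := by
        rw [div_le_iff₀ hε]
        nlinarith
      exact le_trans ht1 (le_max_right _ _)
  · apply IsLeast.csInf_eq
    constructor
    · refine ⟨0, (c3 - c1) / ε, le_refl 0, hd1nn, ?_, (max_eq_right hd1nn).symm⟩
      intro c' hnn hmono hbd
      have m01 : c' 0 ≤ c' 1 := hmono (by decide)
      have hge : c3 - c1 ≤ (c3 - c1) / ε := by
        rw [le_div_iff₀ hε]; nlinarith
      constructor
      · linarith
      · nlinarith
    · rintro B ⟨t0, t1, h0, h1, hall, rfl⟩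
      have hcnn : ∀ i, (0:ℝ) ≤ (![0, 0, c3 - c1] : Fin 3 → ℝ) i := by
        intro i; fin_cases i <;> simp <;> linarith
      have hcm : Monotone (![0, 0, c3 - c1] : Fin 3 → ℝ) := by
        intro a b hab
        fin_cases a <;> fin_cases b <;> simp_all <;>
          first
            | linarith
            | exact absurd hab (by decide)
      obtain ⟨hA, hB⟩ := hall ![0, 0, c3 - c1] hcnn hcm (by simp)
      simp only [Matrix.cons_val_zero, Matrix.cons_val_one, Matrix.head_cons,
        Matrix.cons_val_two, Matrix.tail_cons] at hA hB
      have ht1 : (c3 - c1) / ε ≤ t1 := by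
        rw [div_le_iff₀ hε]
        nlinarith
      exact le_trans ht1 (le_max_right _ _)
  · rw [div_div_div_cancel_right₀]
    exact hε.ne'
end

section
/- Let F be an n×m row-stochastic matrix with n ≥ 2 and b > 0. Assume action n is implementable for the cost vector c^0 = (0,…,0,b). Then the minimum budget of a b-cost-robust contract equals max over distributions λ ∈ Δ([n−1]) of b / TV(F_n, Σ_{i<n} λ_i F_i), where TV denotes total variation distance. -/
open Finset Pointwise

/-- Sum-swap helper. -/
lemma swap_sum_aux {n m : ℕ} (u : Fin n → ℝ) (w : Fin n → Fin m → ℝ) (s : Fin m → ℝ) :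
    ∑ i, u i * (∑ j, w i j * s j) = ∑ j, (∑ i, u i * w i j) * s j := by
  simp only [Finset.mul_sum, Finset.sum_mul, mul_assoc]
  exact Finset.sum_comm

/-- Minimax via separation: there is a minimizer `lam` of
`TV(lam) = ∑ j max (∑ i lam i * a i j) 0` over the simplex, together with a point
`s` of the unit box such that `TV(lam) ≤ a i ⬝ s` for every `i`. -/
lemma minimax_aux (n m : ℕ) (hn : 0 < n) (a : Fin n → Fin m → ℝ) :
    ∃ lam : Fin n → ℝ, (∀ i, 0 ≤ lam i) ∧ (∑ i, lam i = 1) ∧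
      (∀ lam' : Fin n → ℝ, (∀ i, 0 ≤ lam' i) → (∑ i, lam' i = 1) →
        (∑ j, max (∑ i, lam i * a i j) 0) ≤ (∑ j, max (∑ i, lam' i * a i j) 0)) ∧
      ∃ s : Fin m → ℝ, (∀ j, 0 ≤ s j) ∧ (∀ j, s j ≤ 1) ∧
        ∀ i, (∑ j, max (∑ i, lam i * a i j) 0) ≤ ∑ j, a i j * s j := by
  haveI : Nonempty (Fin n) := ⟨⟨0, hn⟩⟩
  set TV : (Fin n → ℝ) → ℝ := fun lam => ∑ j, max (∑ i, lam i * a i j) 0 with hTVdef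
  have hTVcont : Continuous TV := by
    apply continuous_finset_sum
    intro j _
    exact (continuous_finset_sum _ (fun i _ => (continuous_apply i).mul continuous_const)).max
      continuous_const
  -- minimizer over the simplex
  have hp0 : (fun _ : Fin n => (n : ℝ)⁻¹) ∈ stdSimplex ℝ (Fin n) := by
    constructor
    · intro i; positivity
    · simp [Finset.sum_const, Finset.card_univ]
      field_simp
  obtain ⟨lam, hlamS, hmin⟩ := (isCompact_stdSimplex ℝ (Fin n)).exists_isMinOn ⟨_, hp0⟩
    hTVcont.continuousOn
  -- the unit box and the max of the min
  set box : Set (Fin m → ℝ) := Set.pi Set.univ (fun _ => Set.Icc (0:ℝ) 1) with hboxdef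
  have hbox : IsCompact box := isCompact_univ_pi (fun _ => isCompact_Icc)
  have hboxmem : ∀ s : Fin m → ℝ, s ∈ box ↔ ∀ j, 0 ≤ s j ∧ s j ≤ 1 := by
    intro s
    simp only [hboxdef, Set.mem_pi, Set.mem_univ, Set.mem_Icc, forall_true_left]
  have h0box : (0 : Fin m → ℝ) ∈ box := by
    rw [hboxmem]; intro j; simp
  set g : (Fin m → ℝ) → ℝ :=
    fun s => Finset.univ.inf' Finset.univ_nonempty (fun i => ∑ j, a i j * s j) with hgdef
  have hgcont : Continuous g := by
    rw [continuous_iff_continuousAt]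
    intro x
    apply ContinuousAt.finset_inf'_apply Finset.univ_nonempty
    intro i _
    exact (continuous_finset_sum _
      (fun j _ => continuous_const.mul (continuous_apply j))).continuousAt
  obtain ⟨s0, hs0box, hsmax⟩ := hbox.exists_isMaxOn ⟨0, h0box⟩ hgcont.continuousOn
  set v : ℝ := g s0 with hvdef
  -- key claim : TV lam ≤ v
  have hkey : TV lam ≤ v := by
    apply le_of_forall_pos_le_add
    intro ε hε
    -- the closed convex set K
    set K : Set (Fin n → ℝ) :=
      {x | ∃ s, s ∈ box ∧ ∀ i, x i ≤ ∑ j, a i j * s j} with hKdef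
    have hKconv : Convex ℝ K := by
      rintro x ⟨s, hs, hx⟩ y ⟨s', hs', hy⟩ α β hα hβ hαβ
      refine ⟨α • s + β • s', ?_, ?_⟩
      · rw [hboxmem]
        intro j
        have hsj := (hboxmem s).1 hs j
        have hsj' := (hboxmem s').1 hs' j
        constructor
        · have : (0:ℝ) ≤ α * s j + β * s' j := by
            have := mul_nonneg hα hsj.1; have := mul_nonneg hβ hsj'.1; linarith
          simpa using this
        · have : α * s j + β * s' j ≤ 1 := by
            nlinarith [hsj.1, hsj.2, hsj'.1, hsj'.2]
          simpa using this
      · intro i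
        have h1 := hx i
        have h2 := hy i
        have hexp : ∑ j, a i j * (α • s + β • s') j
            = α * (∑ j, a i j * s j) + β * (∑ j, a i j * s' j) := by
          simp only [Pi.add_apply, Pi.smul_apply, smul_eq_mul, Finset.mul_sum,
            ← Finset.sum_add_distrib]
          congr 1; ext j; ring
        have : (α • x + β • y) i = α * x i + β * y i := by simp
        rw [this, hexp]
        have := mul_le_mul_of_nonneg_left h1 hα
        have := mul_le_mul_of_nonneg_left h2 hβ
        linarith
    have hKclosed : IsClosed K := by
      set D : Set (Fin n → ℝ) := (fun s => fun i => ∑ j, a i j * s j) '' box with hDdef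
      have hD : IsCompact D := hbox.image
        (continuous_pi (fun i => continuous_finset_sum _
          (fun j _ => continuous_const.mul (continuous_apply j))))
      have hKeq : K = D + Set.Iic (0 : Fin n → ℝ) := by
        ext x
        constructor
        · rintro ⟨s, hs, hx⟩
          refine Set.mem_add.2 ⟨(fun i => ∑ j, a i j * s j), ⟨s, hs, rfl⟩,
            x - (fun i => ∑ j, a i j * s j), ?_, by abel⟩
          intro i
          simpa [sub_nonpos] using hx i
        · rintro ⟨d, ⟨s, hs, rfl⟩, y, hy, rfl⟩
          refine ⟨s, hs, fun i => ?_⟩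
          have : y i ≤ 0 := hy i
          simp only [Pi.add_apply]
          linarith
      rw [hKeq]
      exact isClosed_Iic.add_left_of_isCompact hD
    -- the point to separate
    set p : Fin n → ℝ := fun _ => v + ε with hpdef
    have hpK : p ∉ K := by
      rintro ⟨s, hs, hp⟩
      have h1 : v + ε ≤ g s := by
        apply Finset.le_inf'
        intro i _
        exact hp i
      have h2 : g s ≤ v := hsmax hs
      linarith
    obtain ⟨f, u, hfK, hfp⟩ := geometric_hahn_banach_closed_point hKconv hKclosed hpK
    set lamf : Fin n → ℝ := fun i => f (fun j => if i = j then 1 else 0) with hlamfdef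
    have hrepr : ∀ x : Fin n → ℝ, f x = ∑ i, x i * lamf i := by
      intro x
      conv_lhs => rw [pi_eq_sum_univ x]
      rw [map_sum]
      refine Finset.sum_congr rfl (fun i _ => ?_)
      rw [map_smul]
      simp [hlamfdef, smul_eq_mul]
    have h0K : (0 : Fin n → ℝ) ∈ K := ⟨0, h0box, fun i => by simp⟩
    have hu0 : 0 < u := by
      have := hfK 0 h0K
      simpa using this
    have hlamf_nonneg : ∀ i, 0 ≤ lamf i := by
      intro i
      by_contra hneg
      push_neg at hneg
      set r : ℝ := (u + 1) / (-lamf i) with hrdef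
      have hr0 : 0 < r := by
        apply div_pos (by linarith) (by linarith)
      have hxK : (fun j => if i = j then -r else 0) ∈ K := by
        refine ⟨0, h0box, fun k => ?_⟩
        simp only [Pi.zero_apply, mul_zero, Finset.sum_const_zero]
        split_ifs <;> linarith
      have hval := hfK _ hxK
      rw [hrepr] at hval
      have hsum : ∑ k, (if i = k then -r else (0:ℝ)) * lamf k = -r * lamf i := by
        rw [Finset.sum_eq_single i]
        · simp
        · intro k _ hk
          simp [Ne.symm hk]
        · simp
      rw [hsum] at hval
      have : -r * lamf i = u + 1 := by
        have h2 : -r * lamf i = r * (-lamf i) := by ring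
        rw [h2, hrdef, div_mul_cancel₀ _ (by linarith : -lamf i ≠ 0)]
      linarith
    set S : ℝ := ∑ i, lamf i with hSdef
    have hSnonneg : 0 ≤ S := Finset.sum_nonneg (fun i _ => hlamf_nonneg i)
    have hfpval : f p = (v + ε) * S := by
      rw [hrepr, hSdef, Finset.mul_sum]
    have hSpos : 0 < S := by
      rcases lt_or_eq_of_le hSnonneg with h | h
      · exact h
      · exfalso
        rw [hfpval, ← h, mul_zero] at hfp
        linarith
    -- the normalized distribution
    set μ : Fin n → ℝ := fun i => lamf i / S with hμdef
    have hμnonneg : ∀ i, 0 ≤ μ i := fun i => div_nonneg (hlamf_nonneg i) hSnonneg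
    have hμsum : ∑ i, μ i = 1 := by
      rw [hμdef, ← Finset.sum_div, ← hSdef, div_self hSpos.ne']
    have hμS : μ ∈ stdSimplex ℝ (Fin n) := ⟨hμnonneg, hμsum⟩
    have hμbound : ∀ s, s ∈ box → ∑ i, μ i * (∑ j, a i j * s j) < v + ε := by
      intro s hs
      have hxK : (fun i => ∑ j, a i j * s j) ∈ K := ⟨s, hs, fun i => le_refl _⟩
      have h1 := hfK _ hxK
      rw [hrepr] at h1
      have h2 : ∑ i, μ i * (∑ j, a i j * s j)
          = (∑ i, (∑ j, a i j * s j) * lamf i) / S := by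
        rw [Finset.sum_div]
        refine Finset.sum_congr rfl (fun i _ => ?_)
        rw [hμdef]; ring
      rw [h2]
      rw [div_lt_iff₀ hSpos]
      calc ∑ i, (∑ j, a i j * s j) * lamf i < u := h1
        _ < f p := hfp
        _ = (v + ε) * S := hfpval
    -- pick the indicator point of the box
    set sμ : Fin m → ℝ := fun j => if 0 ≤ ∑ i, μ i * a i j then 1 else 0 with hsμdef
    have hsμbox : sμ ∈ box := by
      rw [hboxmem]
      intro j
      constructor <;> (simp only [hsμdef]; split_ifs <;> norm_num)
    have hTVμ : TV μ = ∑ i, μ i * (∑ j, a i j * sμ j) := by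
      rw [swap_sum_aux]
      refine Finset.sum_congr rfl (fun j _ => ?_)
      simp only [hsμdef]
      split_ifs with h
      · rw [mul_one, max_eq_left h]
      · push_neg at h
        rw [mul_zero, max_eq_right h.le]
    have : TV μ < v + ε := by
      rw [hTVμ]; exact hμbound sμ hsμbox
    have hle : TV lam ≤ TV μ := hmin hμS
    linarith
  refine ⟨lam, hlamS.1, hlamS.2, ?_, s0, ?_, ?_, ?_⟩
  · intro lam' h1 h2
    exact hmin (⟨h1, h2⟩ : lam' ∈ stdSimplex ℝ (Fin n))
  · intro j; exact ((hboxmem s0).1 hs0box j).1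
  · intro j; exact ((hboxmem s0).1 hs0box j).2
  · intro i
    refine hkey.trans ?_
    exact Finset.inf'_le _ (Finset.mem_univ i)

/-- Distribution distance determines budget: the minimum budget of a
`b`-cost-robust contract equals
`max_{λ ∈ Δ([n-1])} b / TV(F_n, Σ_{i<n} λ_i F_i)`. -/
theorem cost_robust_budget_eq_max_inv_tv
    (n m : ℕ) (hn : 0 < n) (hm : 0 < m)
    (F : Fin (n + 1) → Fin m → ℝ)
    (hFnonneg : ∀ i j, 0 ≤ F i j)
    (hFsum : ∀ i, ∑ j, F i j = 1)
    (b : ℝ) (hb : 0 < b)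
    (hfeas : ∃ t : Fin m → ℝ, (∀ j, 0 ≤ t j) ∧
      (∀ i, i ≠ Fin.last n →
        ∑ j, F i j * t j - 0 ≤ ∑ j, F (Fin.last n) j * t j - b))
    (Brob : ℝ)
    (hBrob : Brob = sInf {B : ℝ | ∃ t : Fin m → ℝ, (∀ j, 0 ≤ t j) ∧
      (∀ c : Fin (n + 1) → ℝ, (∀ i, 0 ≤ c i) → Monotone c →
        c (Fin.last n) - c 0 ≤ b →
        (∀ i, i ≠ Fin.last n →
          ∑ j, F i j * t j - c i ≤
            ∑ j, F (Fin.last n) j * t j - c (Fin.last n))) ∧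
      B = Finset.univ.sup' ⟨(⟨0, hm⟩ : Fin m), Finset.mem_univ _⟩ t}) :
    ∃ lam : Fin n → ℝ, (∀ i, 0 ≤ lam i) ∧ (∑ i, lam i = 1) ∧
      Brob = b / (∑ j, max (F (Fin.last n) j - ∑ i, lam i * F i.castSucc j) 0) ∧
      ∀ lam' : Fin n → ℝ, (∀ i, 0 ≤ lam' i) → (∑ i, lam' i = 1) →
        b / (∑ j, max (F (Fin.last n) j - ∑ i, lam' i * F i.castSucc j) 0) ≤ Brob := by
  set a : Fin n → Fin m → ℝ := fun i j => F (Fin.last n) j - F i.castSucc j with hadef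
  -- rewriting of the TV expression
  have hTVrw : ∀ (lam : Fin n → ℝ), (∑ i, lam i = 1) → ∀ j,
      F (Fin.last n) j - ∑ i, lam i * F i.castSucc j = ∑ i, lam i * a i j := by
    intro lam hsum j
    simp only [hadef, mul_sub, Finset.sum_sub_distrib, ← Finset.sum_mul, hsum, one_mul]
  set Sset : Set ℝ := {B : ℝ | ∃ t : Fin m → ℝ, (∀ j, 0 ≤ t j) ∧
      (∀ c : Fin (n + 1) → ℝ, (∀ i, 0 ≤ c i) → Monotone c →
        c (Fin.last n) - c 0 ≤ b →
        (∀ i, i ≠ Fin.last n →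
          ∑ j, F i j * t j - c i ≤
            ∑ j, F (Fin.last n) j * t j - c (Fin.last n))) ∧
      B = Finset.univ.sup' ⟨(⟨0, hm⟩ : Fin m), Finset.mem_univ _⟩ t} with hSsetdef
  -- robustness is equivalent to feasibility for c⁰ = (0,…,0,b)
  have hrob_of_feas : ∀ t : Fin m → ℝ,
      (∀ i, i ≠ Fin.last n →
        ∑ j, F i j * t j - 0 ≤ ∑ j, F (Fin.last n) j * t j - b) →
      (∀ c : Fin (n + 1) → ℝ, (∀ i, 0 ≤ c i) → Monotone c →
        c (Fin.last n) - c 0 ≤ b →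
        (∀ i, i ≠ Fin.last n →
          ∑ j, F i j * t j - c i ≤
            ∑ j, F (Fin.last n) j * t j - c (Fin.last n))) := by
    intro t ht c hc0 hmono hcb i hi
    have h1 := ht i hi
    have h2 : c 0 ≤ c i := hmono (Fin.zero_le i)
    linarith
  have hfeas_of_rob : ∀ t : Fin m → ℝ,
      (∀ c : Fin (n + 1) → ℝ, (∀ i, 0 ≤ c i) → Monotone c →
        c (Fin.last n) - c 0 ≤ b →
        (∀ i, i ≠ Fin.last n →
          ∑ j, F i j * t j - c i ≤
            ∑ j, F (Fin.last n) j * t j - c (Fin.last n))) →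
      (∀ i, i ≠ Fin.last n →
        ∑ j, F i j * t j - 0 ≤ ∑ j, F (Fin.last n) j * t j - b) := by
    intro t ht i hi
    set c0 : Fin (n+1) → ℝ := fun i => if i = Fin.last n then b else 0 with hc0def
    have h0ne : (0 : Fin (n+1)) ≠ Fin.last n := by
      simp only [Fin.ne_iff_vne, Fin.val_last, Fin.val_zero]
      exact hn.ne
    have key := ht c0
      (by intro k; simp only [hc0def]; split_ifs <;> [exact hb.le; exact le_refl 0])
      (by
        intro k l hkl
        simp only [hc0def]
        by_cases h1 : k = Fin.last n
        · subst h1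
          have : l = Fin.last n := le_antisymm (Fin.le_last l) hkl
          simp [this]
        · simp only [h1, if_false]
          split_ifs <;> [exact hb.le; exact le_refl 0])
      (by simp [hc0def, h0ne])
      i hi
    simpa [hc0def, hi] using key
  -- sum-rearrangement: feasibility gives b ≤ a i ⬝ t
  have hfeas_dot : ∀ t : Fin m → ℝ,
      (∀ i, i ≠ Fin.last n →
        ∑ j, F i j * t j - 0 ≤ ∑ j, F (Fin.last n) j * t j - b) →
      ∀ i : Fin n, b ≤ ∑ j, a i j * t j := by
    intro t ht i
    have hi : (i.castSucc : Fin (n+1)) ≠ Fin.last n := by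
      simp only [Fin.ne_iff_vne, Fin.coe_castSucc, Fin.val_last]
      exact i.2.ne
    have h1 := ht i.castSucc hi
    have h2 : ∑ j, a i j * t j
        = ∑ j, F (Fin.last n) j * t j - ∑ j, F i.castSucc j * t j := by
      simp [hadef, sub_mul, Finset.sum_sub_distrib]
    linarith
  -- lower bound: every robust budget dominates b / TV(lam')
  have hlb : ∀ B ∈ Sset, ∀ lam' : Fin n → ℝ, (∀ i, 0 ≤ lam' i) → (∑ i, lam' i = 1) →
      0 < (∑ j, max (∑ i, lam' i * a i j) 0) ∧
      b / (∑ j, max (∑ i, lam' i * a i j) 0) ≤ B := by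
    rintro B ⟨t, ht0, htrob, rfl⟩ lam' hl0 hl1
    set Bv := Finset.univ.sup' ⟨(⟨0, hm⟩ : Fin m), Finset.mem_univ _⟩ t with hBvdef
    have htB : ∀ j, t j ≤ Bv := fun j => Finset.le_sup' t (Finset.mem_univ j)
    set TV' := ∑ j, max (∑ i, lam' i * a i j) 0 with hTV'def
    have hTV'nonneg : 0 ≤ TV' := Finset.sum_nonneg (fun j _ => le_max_right _ _)
    have hdot := hfeas_dot t (hfeas_of_rob t htrob)
    have hkey : b ≤ ∑ j, (∑ i, lam' i * a i j) * t j := by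
      have h1 : b = ∑ i, lam' i * b := by
        rw [← Finset.sum_mul, hl1, one_mul]
      rw [h1, ← swap_sum_aux]
      apply Finset.sum_le_sum
      intro i _
      exact mul_le_mul_of_nonneg_left (hdot i) (hl0 i)
    have hkey2 : ∑ j, (∑ i, lam' i * a i j) * t j ≤ TV' * Bv := by
      rw [hTV'def, Finset.sum_mul]
      apply Finset.sum_le_sum
      intro j _
      calc (∑ i, lam' i * a i j) * t j
          ≤ max (∑ i, lam' i * a i j) 0 * t j :=
            mul_le_mul_of_nonneg_right (le_max_left _ _) (ht0 j)
        _ ≤ max (∑ i, lam' i * a i j) 0 * Bv :=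
            mul_le_mul_of_nonneg_left (htB j) (le_max_right _ _)
    have hbTV : b ≤ TV' * Bv := hkey.trans hkey2
    have hTV'pos : 0 < TV' := by
      rcases lt_or_eq_of_le hTV'nonneg with h | h
      · exact h
      · exfalso; rw [← h, zero_mul] at hbTV; linarith
    exact ⟨hTV'pos, (div_le_iff₀ hTV'pos).2 (by linarith [hbTV])⟩
  -- nonemptiness of the budget set
  obtain ⟨t₀, ht₀0, ht₀feas⟩ := hfeas
  have hSne : Sset.Nonempty :=
    ⟨_, t₀, ht₀0, hrob_of_feas t₀ ht₀feas, rfl⟩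
  -- the minimax lemma
  obtain ⟨lam, hlam0, hlam1, hlammin, s, hs0, hs1, hsgood⟩ := minimax_aux n m hn a
  set T := ∑ j, max (∑ i, lam i * a i j) 0 with hTdef
  obtain ⟨B₀, hB₀⟩ := id hSne
  have hTpos : 0 < T := (hlb B₀ hB₀ lam hlam0 hlam1).1
  -- the optimal contract
  set t : Fin m → ℝ := fun j => (b / T) * s j with htdef
  have hbT : 0 ≤ b / T := div_nonneg hb.le hTpos.le
  have ht0 : ∀ j, 0 ≤ t j := fun j => mul_nonneg hbT (hs0 j)
  have htfeas : ∀ i, i ≠ Fin.last n →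
      ∑ j, F i j * t j - 0 ≤ ∑ j, F (Fin.last n) j * t j - b := by
    intro i hi
    set i' : Fin n := i.castPred hi with hi'def
    have hii' : i'.castSucc = i := Fin.castSucc_castPred i hi
    have h1 : ∑ j, a i' j * t j = (b / T) * ∑ j, a i' j * s j := by
      rw [Finset.mul_sum]
      refine Finset.sum_congr rfl (fun j _ => ?_)
      simp [htdef]; ring
    have h2 : b ≤ ∑ j, a i' j * t j := by
      rw [h1]
      calc b = (b / T) * T := by rw [div_mul_cancel₀ _ hTpos.ne']
        _ ≤ (b / T) * ∑ j, a i' j * s j :=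
          mul_le_mul_of_nonneg_left (hsgood i') hbT
    have h3 : ∑ j, a i' j * t j
        = ∑ j, F (Fin.last n) j * t j - ∑ j, F i'.castSucc j * t j := by
      simp [hadef, sub_mul, Finset.sum_sub_distrib]
    rw [hii'] at h3
    linarith
  set B : ℝ := Finset.univ.sup' ⟨(⟨0, hm⟩ : Fin m), Finset.mem_univ _⟩ t with hBdef
  have hBmem : B ∈ Sset := ⟨t, ht0, hrob_of_feas t htfeas, rfl⟩
  have hBle : B ≤ b / T := by
    apply Finset.sup'_le
    intro j _
    calc t j = (b / T) * s j := rfl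
      _ ≤ (b / T) * 1 := mul_le_mul_of_nonneg_left (hs1 j) hbT
      _ = b / T := mul_one _
  have hBddBelow : BddBelow Sset :=
    ⟨b / T, fun B' hB' => (hlb B' hB' lam hlam0 hlam1).2⟩
  have hBrobT : Brob = b / T := by
    rw [hBrob]
    apply le_antisymm
    · exact (csInf_le hBddBelow hBmem).trans hBle
    · exact le_csInf hSne (fun B' hB' => (hlb B' hB' lam hlam0 hlam1).2)
  refine ⟨lam, hlam0, hlam1, ?_, ?_⟩
  · rw [hBrobT, hTdef]
    congr 1
    exact Finset.sum_congr rfl (fun j _ => by rw [hTVrw lam hlam1 j])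
  · intro lam' hl0 hl1
    have : ∀ B' ∈ Sset, b / (∑ j, max (∑ i, lam' i * a i j) 0) ≤ B' :=
      fun B' hB' => (hlb B' hB' lam' hl0 hl1).2
    have h2 : b / (∑ j, max (∑ i, lam' i * a i j) 0) ≤ sInf Sset :=
      le_csInf hSne this
    rw [hBrob]
    calc b / (∑ j, max (F (Fin.last n) j - ∑ i, lam' i * F i.castSucc j) 0)
        = b / (∑ j, max (∑ i, lam' i * a i j) 0) := by
          congr 1
          exact Finset.sum_congr rfl (fun j _ => by rw [hTVrw lam' hl1 j])
      _ ≤ sInf Sset := h2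
end

section
/- Let F be an n×m row-stochastic matrix with strictly positive entries satisfying the monotone likelihood ratio property: F_{i,j}/F_{i',j} is nondecreasing in j for all i > i'. Then any test ψ ∈ [0,1]^m minimizing the composite risk R(ψ) = max_{i<n}(Σ_j F_{ij}ψ_j + Σ_j F_{nj}(1−ψ_j)) can be taken to be a deterministic threshold test: there exists j_0 ∈ [m] such that ψ(j) = 1 if j ≥ j_0 and ψ(j) = 0 otherwise, achieving the minimal risk. -/
private lemma sum_comparison {m : ℕ} (a b : Fin m → ℝ) (U : Finset (Fin m))
    (ha : ∑ j, a j = 1) (hb : ∑ j, b j = 1)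
    (hab : ∀ j ∈ U, ∀ k ∈ Uᶜ, b k * a j ≤ b j * a k) :
    ∑ j ∈ U, a j ≤ ∑ j ∈ U, b j := by
  have key : 0 ≤ ∑ j ∈ U, ∑ k ∈ Uᶜ, (b j * a k - b k * a j) :=
    Finset.sum_nonneg fun j hj => Finset.sum_nonneg fun k hk => by
      have := hab j hj k hk; linarith
  have e1 : ∑ j ∈ U, ∑ k ∈ Uᶜ, (b j * a k - b k * a j)
      = (∑ j ∈ U, b j) * (∑ k ∈ Uᶜ, a k) - (∑ k ∈ Uᶜ, b k) * (∑ j ∈ U, a j) := by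
    simp only [Finset.sum_sub_distrib, ← Finset.mul_sum, ← Finset.sum_mul]
  have hca : ∑ k ∈ Uᶜ, a k = 1 - ∑ j ∈ U, a j := by
    have := Finset.sum_add_sum_compl U a; rw [ha] at this; linarith
  have hcb : ∑ k ∈ Uᶜ, b k = 1 - ∑ j ∈ U, b j := by
    have := Finset.sum_add_sum_compl U b; rw [hb] at this; linarith
  rw [e1, hca, hcb] at key
  nlinarith [key]

/-- Under MLR, a deterministic threshold test achieves the minimal
composite risk `R(ψ) = max_{i<n}(FP_i + FN)`. -/
theorem mlr_threshold_test_optimal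
    (n m : ℕ) (hn : 0 < n) (hm : 0 < m)
    (F : Fin (n + 1) → Fin m → ℝ)
    (hFpos : ∀ i j, 0 < F i j)
    (hFsum : ∀ i, ∑ j, F i j = 1)
    (hMLR : ∀ (i i' : Fin (n + 1)) (j j' : Fin m), i' < i → j' < j →
      F i j * F i' j' ≥ F i j' * F i' j)
    (R : (Fin m → ℝ) → ℝ)
    (hR : ∀ ψ, R ψ = Finset.univ.sup' ⟨(⟨0, hn⟩ : Fin n), Finset.mem_univ _⟩
      (fun i : Fin n =>
        (∑ j, F i.castSucc j * ψ j) + (∑ j, F (Fin.last n) j * (1 - ψ j)))) :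
    ∃ j0 : Fin m,
      ∀ ψ : Fin m → ℝ, (∀ j, 0 ≤ ψ j ∧ ψ j ≤ 1) →
        R (fun j => if j0 ≤ j then (1 : ℝ) else 0) ≤ R ψ := by
  have hn1 : n - 1 < n := Nat.sub_lt hn one_pos
  set ν : Fin (n + 1) := Fin.last n with hν
  set iN : Fin n := ⟨n - 1, hn1⟩ with hiN
  set μ : Fin (n + 1) := iN.castSucc with hμ
  have hμν : μ < ν := by
    simp only [hμ, hν, Fin.lt_def, Fin.coe_castSucc, Fin.val_last, hiN]
    omega
  set T : Finset (Fin m) := Finset.univ.filter (fun j => F μ j ≤ F ν j) with hT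
  have hTne : T.Nonempty := by
    by_contra h
    have h' : ∀ j, F ν j < F μ j := by
      intro j
      by_contra h2
      exact h ⟨j, by simp [hT, le_of_not_gt h2]⟩
    have huniv : (Finset.univ : Finset (Fin m)).Nonempty :=
      ⟨⟨0, hm⟩, Finset.mem_univ _⟩
    have := Finset.sum_lt_sum_of_nonempty huniv (fun j _ => h' j)
    rw [hFsum, hFsum] at this
    exact lt_irrefl 1 this
  set j0 : Fin m := T.min' hTne with hj0
  refine ⟨j0, ?_⟩
  have hup : ∀ j, j0 ≤ j → F μ j ≤ F ν j := by
    intro j hj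
    have h0 : F μ j0 ≤ F ν j0 :=
      (Finset.mem_filter.mp (T.min'_mem hTne)).2
    rcases eq_or_lt_of_le hj with h | h
    · rwa [← h]
    · have hm1 := hMLR ν μ j j0 hμν h
      nlinarith [hFpos μ j0, hFpos μ j]
  have hdown : ∀ j, ¬ j0 ≤ j → F ν j < F μ j := by
    intro j hj
    by_contra h2
    exact hj (T.min'_le j (by simp [hT, le_of_not_gt h2]))
  set ψs : Fin m → ℝ := fun j => if j0 ≤ j then (1 : ℝ) else 0 with hψs
  intro ψ hψ
  rw [hR, hR]
  set U : Finset (Fin m) := Finset.univ.filter (fun j => j0 ≤ j) with hU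
  have hsum_ψs : ∀ i : Fin (n + 1), ∑ j, F i j * ψs j = ∑ j ∈ U, F i j := by
    intro i
    rw [hU, Finset.sum_filter]
    apply Finset.sum_congr rfl
    intro j _
    by_cases h : j0 ≤ j <;> simp [hψs, h]
  -- dominance: FP_i(ψs) ≤ FP_{n-1}(ψs)
  have key1 : ∀ i : Fin n, (∑ j, F i.castSucc j * ψs j) ≤ ∑ j, F μ j * ψs j := by
    intro i
    rw [hsum_ψs, hsum_ψs]
    have hle : i.castSucc ≤ μ := by
      simp only [hμ, Fin.le_def, Fin.coe_castSucc, hiN]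
      omega
    rcases eq_or_lt_of_le hle with h | h
    · rw [h]
    · apply sum_comparison (F i.castSucc) (F μ) U (hFsum _) (hFsum _)
      intro j hj k hk
      rw [hU, Finset.mem_filter] at hj
      rw [Finset.mem_compl, hU, Finset.mem_filter] at hk
      have hkj : k < j := lt_of_lt_of_le (lt_of_not_ge (fun hc => hk ⟨Finset.mem_univ _, hc⟩)) hj.2
      exact hMLR μ i.castSucc j k h hkj
  -- Neyman-Pearson: the threshold test is optimal for F_{n-1} vs F_ν
  have key2 : (∑ j, F μ j * ψs j) + (∑ j, F ν j * (1 - ψs j))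
      ≤ (∑ j, F μ j * ψ j) + (∑ j, F ν j * (1 - ψ j)) := by
    rw [← Finset.sum_add_distrib, ← Finset.sum_add_distrib]
    apply Finset.sum_le_sum
    intro j _
    rcases hψ j with ⟨hψ0, hψ1⟩
    by_cases hc : j0 ≤ j
    · have := hup j hc
      simp only [hψs, if_pos hc]
      nlinarith
    · have := hdown j hc
      simp only [hψs, if_neg hc]
      nlinarith
  apply Finset.sup'_le
  intro i _
  have h3 : (∑ j, F μ j * ψ j) + (∑ j, F ν j * (1 - ψ j))
      ≤ Finset.univ.sup' ⟨(⟨0, hn⟩ : Fin n), Finset.mem_univ _⟩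
        (fun i : Fin n =>
          (∑ j, F i.castSucc j * ψ j) + (∑ j, F (Fin.last n) j * (1 - ψ j))) := by
    have := Finset.le_sup' (f := fun i : Fin n =>
        (∑ j, F i.castSucc j * ψ j) + (∑ j, F (Fin.last n) j * (1 - ψ j)))
      (Finset.mem_univ iN)
    simpa [← hμ, ← hν] using this
  have h1 := key1 i
  linarith
end

section
/- Let F be an n×m matrix with positive entries satisfying MLR, let b > 0, and suppose action n is implementable. Then the minimum-budget b-cost-robust contract is a monotone threshold contract: there exist B > 0 and j* ∈ [m] such that t_j = B for j ≥ j* and t_j = 0 for j < j*. -/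
open Finset

/-- FOSD from MLR: upper-tail sums are monotone in the action index. -/
lemma mlr_fosd {n m : ℕ} (F : Fin (n+1) → Fin m → ℝ)
    (hFsum : ∀ i, ∑ j, F i j = 1)
    (hMLR : ∀ (i i' : Fin (n + 1)) (j j' : Fin m), i' < i → j' < j →
      F i j * F i' j' ≥ F i j' * F i' j)
    (i i' : Fin (n+1)) (hii : i < i') (js : Fin m) :
    ∑ j ∈ univ.filter (fun j => js ≤ j), F i j ≤
      ∑ j ∈ univ.filter (fun j => js ≤ j), F i' j := by
  set A := univ.filter (fun j : Fin m => js ≤ j) with hA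
  set Ac := univ.filter (fun j : Fin m => ¬ js ≤ j) with hAc
  have hsplit : ∀ k, ∑ j ∈ A, F k j + ∑ j ∈ Ac, F k j = 1 := by
    intro k
    rw [hA, hAc, Finset.sum_filter_add_sum_filter_not]
    exact hFsum k
  have key : (∑ j ∈ A, F i j) * (∑ j' ∈ Ac, F i' j') ≤
      (∑ j ∈ A, F i' j) * (∑ j' ∈ Ac, F i j') := by
    rw [Finset.sum_mul_sum, Finset.sum_mul_sum]
    apply Finset.sum_le_sum
    intro j hj
    apply Finset.sum_le_sum
    intro j' hj'
    have hjA : js ≤ j := (Finset.mem_filter.mp hj).2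
    have hj'Ac : ¬ js ≤ j' := (Finset.mem_filter.mp hj').2
    have hlt : j' < j := lt_of_lt_of_le (lt_of_not_ge hj'Ac) hjA
    nlinarith [hMLR i' i j j' hii hlt]
  have e1 : ∑ j ∈ Ac, F i j = 1 - ∑ j ∈ A, F i j := by linarith [hsplit i]
  have e2 : ∑ j ∈ Ac, F i' j = 1 - ∑ j ∈ A, F i' j := by linarith [hsplit i']
  rw [e1, e2] at key
  nlinarith [key, mul_comm (∑ j ∈ A, F i j) (∑ j ∈ A, F i' j)]

/-- Under MLR, the minimum-budget `b`-cost-robust contract is a monotone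
threshold contract: full budget `B` above some threshold `j*`, zero below. -/
theorem mlr_min_budget_robust_is_threshold
    (n m : ℕ) (hn : 0 < n) (hm : 0 < m)
    (F : Fin (n + 1) → Fin m → ℝ)
    (hFpos : ∀ i j, 0 < F i j)
    (hFsum : ∀ i, ∑ j, F i j = 1)
    (hMLR : ∀ (i i' : Fin (n + 1)) (j j' : Fin m), i' < i → j' < j →
      F i j * F i' j' ≥ F i j' * F i' j)
    (b : ℝ) (hb : 0 < b)
    (hfeas : ∃ t : Fin m → ℝ, (∀ j, 0 ≤ t j) ∧
      (∀ i, i ≠ Fin.last n →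
        ∑ j, F i j * t j - 0 ≤ ∑ j, F (Fin.last n) j * t j - b)) :
    ∃ (B : ℝ) (jStar : Fin m), 0 < B ∧
      (let t : Fin m → ℝ := fun j => if jStar ≤ j then B else 0
      (∀ c : Fin (n + 1) → ℝ, (∀ i, 0 ≤ c i) → Monotone c →
        c (Fin.last n) - c 0 ≤ b →
        (∀ i, i ≠ Fin.last n →
          ∑ j, F i j * t j - c i ≤
            ∑ j, F (Fin.last n) j * t j - c (Fin.last n))) ∧
      (∀ t' : Fin m → ℝ, (∀ j, 0 ≤ t' j) →
        (∀ c : Fin (n + 1) → ℝ, (∀ i, 0 ≤ c i) → Monotone c →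
          c (Fin.last n) - c 0 ≤ b →
          (∀ i, i ≠ Fin.last n →
            ∑ j, F i j * t' j - c i ≤
              ∑ j, F (Fin.last n) j * t' j - c (Fin.last n))) →
        Finset.univ.sup' ⟨(⟨0, hm⟩ : Fin m), Finset.mem_univ _⟩ t ≤
          Finset.univ.sup' ⟨(⟨0, hm⟩ : Fin m), Finset.mem_univ _⟩ t')) := by
  classical
  set p : Fin m → ℝ := F (Fin.last n) with hp
  have hn1 : n - 1 < n + 1 := by omega
  set i0 : Fin (n+1) := ⟨n-1, hn1⟩ with hi0def
  have hi0lt : i0 < Fin.last n := by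
    simp only [Fin.lt_def, hi0def, Fin.last]
    omega
  have hi0ne : i0 ≠ Fin.last n := ne_of_lt hi0lt
  set q : Fin m → ℝ := F i0 with hq
  -- the crossing set is nonempty
  set S := univ.filter (fun j : Fin m => q j ≤ p j) with hS
  have hSne : S.Nonempty := by
    by_contra h
    rw [Finset.not_nonempty_iff_eq_empty, hS, Finset.filter_eq_empty_iff] at h
    have hlt : ∀ j : Fin m, p j < q j := by
      intro j
      exact lt_of_not_ge (h (mem_univ j))
    have : ∑ j, p j < ∑ j, q j :=
      Finset.sum_lt_sum_of_nonempty ⟨(⟨0, hm⟩ : Fin m), mem_univ _⟩ fun j _ => hlt j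
    rw [hp, hq, hFsum, hFsum] at this
    exact lt_irrefl _ this
  set js : Fin m := S.min' hSne with hjs
  have hjsS : js ∈ S := S.min'_mem hSne
  have hjsle : q js ≤ p js := (Finset.mem_filter.mp hjsS).2
  -- single crossing: above the threshold p ≥ q, below p < q
  have habove : ∀ j : Fin m, js ≤ j → q j ≤ p j := by
    intro j hj
    rcases eq_or_lt_of_le hj with h | h
    · rwa [← h]
    · have hm1 := hMLR (Fin.last n) i0 j js hi0lt h
      have h1 : 0 < q js := hFpos i0 js
      have h2 : 0 < q j := hFpos i0 j
      nlinarith [hm1]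
  have hbelow : ∀ j : Fin m, ¬ js ≤ j → p j < q j := by
    intro j hj
    by_contra h
    have : j ∈ S := Finset.mem_filter.mpr ⟨mem_univ j, le_of_not_gt h⟩
    exact hj (S.min'_le j this)
  set A := univ.filter (fun j : Fin m => js ≤ j) with hA
  set D : ℝ := ∑ j ∈ A, (p j - q j) with hD
  have hne : (univ : Finset (Fin m)).Nonempty := ⟨(⟨0, hm⟩ : Fin m), mem_univ _⟩
  -- key inequality: any robust-at-i0 contract needs budget at least b / D
  have key : ∀ t' : Fin m → ℝ, (∀ j, 0 ≤ t' j) →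
      b ≤ ∑ j, (p j - q j) * t' j → b ≤ (univ.sup' hne t') * D := by
    intro t' ht'0 hbt
    set M := univ.sup' hne t' with hM
    have hMle : ∀ j, t' j ≤ M := fun j => Finset.le_sup' t' (mem_univ j)
    have hsum : ∑ j, (p j - q j) * t' j ≤ ∑ j ∈ A, (p j - q j) * t' j := by
      rw [← Finset.sum_filter_add_sum_filter_not univ (fun j : Fin m => js ≤ j)
        (fun j => (p j - q j) * t' j)]
      have : ∑ j ∈ univ.filter (fun j : Fin m => ¬ js ≤ j), (p j - q j) * t' j ≤ 0 := by
        apply Finset.sum_nonpos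
        intro j hj
        have := hbelow j (Finset.mem_filter.mp hj).2
        exact mul_nonpos_of_nonpos_of_nonneg (by linarith) (ht'0 j)
      rw [← hA]
      linarith
    have hsum2 : ∑ j ∈ A, (p j - q j) * t' j ≤ ∑ j ∈ A, (p j - q j) * M := by
      apply Finset.sum_le_sum
      intro j hj
      have hpq : 0 ≤ p j - q j := by
        have := habove j (Finset.mem_filter.mp hj).2
        linarith
      exact mul_le_mul_of_nonneg_left (hMle j) hpq
    have : ∑ j ∈ A, (p j - q j) * M = M * D := by
      rw [hD, Finset.mul_sum]
      apply Finset.sum_congr rfl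
      intro j _
      ring
    linarith
  -- turn the robustness inequality into the form needed by `key`
  have hconv : ∀ (i : Fin (n+1)) (t' : Fin m → ℝ),
      ∑ j, (F i j) * t' j - 0 ≤ ∑ j, p j * t' j - b →
      b ≤ ∑ j, (p j - F i j) * t' j := by
    intro i t' h
    have : ∑ j, (p j - F i j) * t' j = ∑ j, p j * t' j - ∑ j, F i j * t' j := by
      rw [← Finset.sum_sub_distrib]
      apply Finset.sum_congr rfl
      intro j _
      ring
    rw [this]
    linarith
  -- D is positive, by feasibility
  have hDpos : 0 < D := by
    obtain ⟨t, ht0, htr⟩ := hfeas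
    have h1 := key t ht0 (hconv i0 t (htr i0 hi0ne))
    have hM0 : 0 ≤ univ.sup' hne t :=
      le_trans (ht0 ⟨0, hm⟩) (Finset.le_sup' t (mem_univ _))
    by_contra h
    push_neg at h
    nlinarith
  have hBpos : 0 < b / D := div_pos hb hDpos
  refine ⟨b / D, js, hBpos, ?_, ?_⟩
  · -- robustness of the threshold contract
    intro c hc0 hmono hcb i hine
    have hsumt : ∀ k : Fin (n+1),
        ∑ j, F k j * (if js ≤ j then b / D else 0) = (∑ j ∈ A, F k j) * (b / D) := by
      intro k
      rw [hA, Finset.sum_mul]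
      rw [show (fun j => F k j * (if js ≤ j then b / D else 0)) =
        (fun j => if js ≤ j then F k j * (b / D) else 0) by
          funext j; split <;> simp]
      exact (Finset.sum_filter _ _).symm
    have hGi : ∑ j ∈ A, F i j ≤ ∑ j ∈ A, F i0 j := by
      have hle : i ≤ i0 := by
        have : i.val ≤ n - 1 := by
          have := i.isLt
          have hne' : i.val ≠ n := fun h => hine (Fin.ext h)
          omega
        exact this
      rcases lt_or_eq_of_le hle with h | h
      · exact mlr_fosd F hFsum hMLR i i0 h js
      · rw [h]
    have hci : c 0 ≤ c i := hmono (Fin.zero_le i)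
    have hcl : c (Fin.last n) - c i ≤ b := by linarith
    have hDeq : (∑ j ∈ A, p j) - (∑ j ∈ A, q j) = D := by
      rw [hD, Finset.sum_sub_distrib]
    rw [hsumt i, hsumt (Fin.last n)]
    have hGq : ∑ j ∈ A, F i0 j = ∑ j ∈ A, q j := rfl
    have hGp : ∑ j ∈ A, F (Fin.last n) j = ∑ j ∈ A, p j := rfl
    rw [hGp]
    have hmul : (∑ j ∈ A, F i j) * (b / D) ≤ (∑ j ∈ A, q j) * (b / D) := by
      apply mul_le_mul_of_nonneg_right _ (le_of_lt hBpos)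
      rw [← hGq]; exact hGi
    have hbd : ((∑ j ∈ A, p j) - (∑ j ∈ A, q j)) * (b / D) = b := by
      rw [hDeq]
      field_simp
    nlinarith [hmul, hbd]
  · -- optimality
    intro t' ht'0 ht'rob
    set c : Fin (n+1) → ℝ := fun i => if i = Fin.last n then b else 0 with hc
    have hc0 : ∀ i, 0 ≤ c i := by
      intro i; rw [hc]; dsimp only; split
      · linarith
      · exact le_refl 0
    have hcm : Monotone c := by
      intro x y hxy
      rw [hc]; dsimp only
      by_cases hx : x = Fin.last n
      · have : y = Fin.last n := le_antisymm (Fin.le_last y) (hx ▸ hxy)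
        simp [hx, this]
      · by_cases hy : y = Fin.last n <;> simp [hx, hy] <;> linarith
    have hc0ne : (0 : Fin (n+1)) ≠ Fin.last n := by
      intro h
      have := congrArg Fin.val h
      simp [Fin.last] at this
      omega
    have hcb : c (Fin.last n) - c 0 ≤ b := by
      rw [hc]; simp [hc0ne]
    have hrb := ht'rob c hc0 hcm hcb i0 hi0ne
    have hrb' : ∑ j, F i0 j * t' j - 0 ≤ ∑ j, p j * t' j - b := by
      rw [hc] at hrb
      simp only [hi0ne, hc0ne, if_neg, if_pos rfl] at hrb
      simpa using hrb
    have hkey := key t' ht'0 (hconv i0 t' hrb')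
    have hBle : b / D ≤ univ.sup' hne t' := by
      rw [div_le_iff₀ hDpos]
      linarith
    apply Finset.sup'_le
    intro j _
    split
    · exact hBle
    · exact le_trans (ht'0 ⟨0, hm⟩) (Finset.le_sup' t' (mem_univ _))
end

section
/- Consider a two-action (n = 2) contract setting with outcome distributions F_1, F_2 on [m], costs c_1 = 0 and c_2 = b > 0, where F_1 ≠ F_2. Then the minimum budget among contracts implementing action 2 equals b / TV(F_2, F_1), and is achieved by the contract t_j = (b/TV(F_2,F_1)) · 1[F_2(j) > F_1(j)]. -/
/-- Two-action min-budget contracts: with costs `(0, b)`, the minimum budget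
is `b / TV(F₂, F₁)`, achieved by `t_j = (b/TV) · 1[F₂(j) > F₁(j)]`. -/
theorem two_action_min_budget
    (m : ℕ) (hm : 0 < m)
    (F1 F2 : Fin m → ℝ)
    (hF1 : ∀ j, 0 ≤ F1 j) (hF2 : ∀ j, 0 ≤ F2 j)
    (hF1sum : ∑ j, F1 j = 1) (hF2sum : ∑ j, F2 j = 1)
    (hne : F1 ≠ F2)
    (b : ℝ) (hb : 0 < b)
    (TV : ℝ) (hTV : TV = ∑ j, max (F2 j - F1 j) 0)
    (tStar : Fin m → ℝ)
    (htStar : ∀ j, tStar j = b / TV * (if F1 j < F2 j then (1 : ℝ) else 0)) :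
    (∑ j, F1 j * tStar j - 0 ≤ ∑ j, F2 j * tStar j - b) ∧
    (Finset.univ.sup' ⟨(⟨0, hm⟩ : Fin m), Finset.mem_univ _⟩ tStar = b / TV) ∧
    (∀ t : Fin m → ℝ, (∀ j, 0 ≤ t j) →
      (∑ j, F1 j * t j - 0 ≤ ∑ j, F2 j * t j - b) →
      b / TV ≤ Finset.univ.sup' ⟨(⟨0, hm⟩ : Fin m), Finset.mem_univ _⟩ t) := by
  -- TV > 0
  have hTVnn : ∀ j, (0:ℝ) ≤ max (F2 j - F1 j) 0 := fun j => le_max_right _ _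
  have hTVpos : 0 < TV := by
    rcases lt_or_eq_of_le (Finset.sum_nonneg (fun j _ => hTVnn j)) with h | h
    · rwa [hTV]
    · exfalso
      have hz : ∀ j ∈ Finset.univ, max (F2 j - F1 j) 0 = 0 := by
        intro j _
        have := (Finset.sum_eq_zero_iff_of_nonneg (fun j _ => hTVnn j)).mp h.symm
        exact this j (Finset.mem_univ j)
      have hle : ∀ j, F2 j ≤ F1 j := by
        intro j
        have := hz j (Finset.mem_univ j)
        have : F2 j - F1 j ≤ 0 := by
          by_contra hc
          push_neg at hc
          rw [max_eq_left hc.le] at this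
          linarith
        linarith
      have hsum0 : ∑ j, (F1 j - F2 j) = 0 := by
        rw [Finset.sum_sub_distrib, hF1sum, hF2sum]; ring
      have heq : ∀ j ∈ Finset.univ, F1 j - F2 j = 0 :=
        (Finset.sum_eq_zero_iff_of_nonneg (fun j _ => by linarith [hle j])).mp hsum0
      apply hne
      funext j
      have := heq j (Finset.mem_univ j)
      linarith
  have hbTV : 0 < b / TV := div_pos hb hTVpos
  -- there exists a j with F1 j < F2 j
  have hex : ∃ j, F1 j < F2 j := by
    by_contra hc
    push_neg at hc
    have : TV = 0 := by
      rw [hTV]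
      apply Finset.sum_eq_zero
      intro j _
      rw [max_eq_right]; linarith [hc j]
    linarith
  -- key sum identity: ∑ (F2-F1) tStar = b
  have hkey : ∑ j, (F2 j - F1 j) * tStar j = b := by
    have : ∀ j, (F2 j - F1 j) * tStar j = b / TV * max (F2 j - F1 j) 0 := by
      intro j
      rw [htStar j]
      by_cases h : F1 j < F2 j
      · rw [if_pos h, max_eq_left (by linarith)]; ring
      · rw [if_neg h, max_eq_right (by push_neg at h; linarith)]; ring
    rw [Finset.sum_congr rfl (fun j _ => this j), ← Finset.mul_sum, ← hTV]
    field_simp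
  refine ⟨?_, ?_, ?_⟩
  · have : ∑ j, F2 j * tStar j - ∑ j, F1 j * tStar j = b := by
      rw [← Finset.sum_sub_distrib, ← hkey]
      congr 1; funext j; ring
    linarith
  · apply le_antisymm
    · apply Finset.sup'_le
      intro j _
      rw [htStar j]
      by_cases h : F1 j < F2 j
      · rw [if_pos h]; linarith
      · rw [if_neg h]; linarith
    · obtain ⟨j, hj⟩ := hex
      have : tStar j = b / TV := by rw [htStar j, if_pos hj]; ring
      rw [← this]
      exact Finset.le_sup' _ (Finset.mem_univ j)
  · intro t ht hIC
    set M := Finset.univ.sup' ⟨(⟨0, hm⟩ : Fin m), Finset.mem_univ _⟩ t with hM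
    have htM : ∀ j, t j ≤ M := fun j => Finset.le_sup' _ (Finset.mem_univ j)
    have hM0 : 0 ≤ M := le_trans (ht ⟨0, hm⟩) (htM _)
    have hsum : b ≤ ∑ j, (F2 j - F1 j) * t j := by
      have : ∑ j, (F2 j - F1 j) * t j = ∑ j, F2 j * t j - ∑ j, F1 j * t j := by
        rw [← Finset.sum_sub_distrib]; congr 1; funext j; ring
      linarith
    have hbound : ∑ j, (F2 j - F1 j) * t j ≤ TV * M := by
      rw [hTV, Finset.sum_mul]
      apply Finset.sum_le_sum
      intro j _
      by_cases h : 0 ≤ F2 j - F1 j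
      · rw [max_eq_left h]
        exact mul_le_mul_of_nonneg_left (htM j) h
      · push_neg at h
        rw [max_eq_right h.le]
        have : (F2 j - F1 j) * t j ≤ 0 := mul_nonpos_of_nonpos_of_nonneg h.le (ht j)
        linarith
    rw [div_le_iff₀ hTVpos]
    calc b ≤ TV * M := le_trans hsum hbound
    _ = M * TV := mul_comm _ _
end
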